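/- Fix k, r₀ > 0 and ξ ∈ (0, 1), and for each large integer m define v_m(r, θ) = β_m J_m(k r) e^{imθ} on the disk B_{r₀} ⊂ ℝ², where β_m > 0 is arbitrary. Then the L²-mass ratio ∥v_m∥²_{L²(B_{ξ r₀})} / ∥v_m∥²_{L²(B_{r₀})} ≤ C(k, r₀) · ξ^{2m+2} · (1 + 2m) for all sufficiently large m; in particular the ratio tends to 0 as m → ∞, i.e., v_m is surface-localized. -/

import Mathlib

open Filter MeasureTheory

/-- The Bessel function of the first kind of integer order `m`,
defined by its power series. -/
noncomputable def besselJ (m : ℕ) (x : ℝ) : ℝ :=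
  ∑' n : ℕ, ((-1 : ℝ) ^ n / (n.factorial * (n + m).factorial)) * (x / 2) ^ (2 * n + m)

open scoped Pointwise

lemma besselJ_term_bound (m : ℕ) (x : ℝ) (h : 3 * (x / 2) ^ 2 ≤ m + 1) (n : ℕ) :
    |((-1 : ℝ) ^ n / (n.factorial * (n + m).factorial)) * (x / 2) ^ (2 * n + m)|
      ≤ (|x / 2| ^ m / m.factorial) * (1 / 3) ^ n := by
  have hfac : (m.factorial : ℝ) * (m + 1) ^ n ≤ ((n + m).factorial : ℝ) := by
    have := Nat.factorial_mul_pow_le_factorial (m := m) (n := n)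
    calc (m.factorial : ℝ) * (m + 1) ^ n = ((m.factorial * (m + 1) ^ n : ℕ) : ℝ) := by
          push_cast; ring
      _ ≤ ((m + n).factorial : ℝ) := by exact_mod_cast this
      _ = ((n + m).factorial : ℝ) := by rw [Nat.add_comm]
  have hm1 : (0 : ℝ) < m + 1 := by positivity
  have hmf : (0 : ℝ) < m.factorial := by exact_mod_cast m.factorial_pos
  have hnf : (1 : ℝ) ≤ n.factorial := by exact_mod_cast n.factorial_pos
  have habs : |((-1 : ℝ) ^ n / (n.factorial * (n + m).factorial)) * (x / 2) ^ (2 * n + m)|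
      = |x / 2| ^ (2 * n + m) / (n.factorial * (n + m).factorial) := by
    rw [abs_mul, abs_div, abs_pow, abs_pow, abs_neg, abs_one, one_pow]
    have : |((n.factorial : ℝ) * (n + m).factorial)| = (n.factorial : ℝ) * (n + m).factorial := by
      apply abs_of_pos; positivity
    rw [this]; ring
  rw [habs]
  have hx2 : |x / 2| ^ (2 * n + m) = |x / 2| ^ m * ((x / 2) ^ 2) ^ n := by
    rw [pow_add, pow_mul, sq_abs]; ring
  rw [hx2]
  have hden : (m.factorial : ℝ) * (m + 1) ^ n ≤ (n.factorial : ℝ) * (n + m).factorial := by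
    calc (m.factorial : ℝ) * (m + 1) ^ n ≤ ((n + m).factorial : ℝ) := hfac
      _ ≤ (n.factorial : ℝ) * (n + m).factorial := by
          nlinarith [(Nat.one_le_cast (α := ℝ)).2 (n + m).factorial_pos]
  have hnum : ((x / 2) ^ 2) ^ n ≤ ((m + 1) / 3) ^ n := by
    apply pow_le_pow_left₀ (by positivity)
    linarith
  have hA : (0:ℝ) ≤ |x / 2| ^ m := by positivity
  calc |x / 2| ^ m * ((x / 2) ^ 2) ^ n / ((n.factorial : ℝ) * (n + m).factorial)
      ≤ |x / 2| ^ m * ((m + 1) / 3) ^ n / ((m.factorial : ℝ) * (m + 1) ^ n) := by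
        apply div_le_div₀ (by positivity) (by exact mul_le_mul_of_nonneg_left hnum hA)
          (by positivity) hden
    _ = (|x / 2| ^ m / m.factorial) * (1 / 3) ^ n := by
        rw [div_pow]
        field_simp
        rw [mul_assoc, ← mul_pow]; norm_num

set_option maxHeartbeats 1000000 in
lemma besselJ_est (m : ℕ) (x : ℝ) (hx : 0 ≤ x) (h : 3 * (x / 2) ^ 2 ≤ m + 1) :
    |besselJ m x - (x / 2) ^ m / m.factorial| ≤ (x / 2) ^ m / m.factorial / 2 := by
  set f : ℕ → ℝ := fun n =>
    ((-1 : ℝ) ^ n / (n.factorial * (n + m).factorial)) * (x / 2) ^ (2 * n + m) with hf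
  have hA : |x / 2| ^ m = (x / 2) ^ m := by rw [abs_of_nonneg (by linarith)]
  set A : ℝ := (x / 2) ^ m / m.factorial with hAdef
  have hA0 : 0 ≤ A := by positivity
  have hbd : ∀ n, |f n| ≤ A * (1 / 3) ^ n := by
    intro n
    have := besselJ_term_bound m x h n
    rwa [hA] at this
  have hsumg : Summable (fun n : ℕ => A * (1 / 3) ^ n) :=
    (summable_geometric_of_lt_one (by norm_num) (by norm_num)).mul_left A
  have hsum : Summable f :=
    Summable.of_norm_bounded hsumg (by simpa [Real.norm_eq_abs] using hbd)
  have hzero : besselJ m x = f 0 + ∑' n, f (n + 1) := by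
    rw [besselJ, ← hf, Summable.tsum_eq_zero_add hsum]
  have hf0 : f 0 = A := by
    simp [hf, hAdef, div_eq_mul_inv, mul_comm]
  have hsum' : Summable (fun n : ℕ => f (n + 1)) := (summable_nat_add_iff 1).2 hsum
  have htail : |∑' n, f (n + 1)| ≤ A / 2 := by
    calc |∑' n, f (n + 1)| ≤ ∑' n, |f (n + 1)| := by
          simpa [Real.norm_eq_abs] using norm_tsum_le_tsum_norm hsum'.norm
      _ ≤ ∑' n : ℕ, A * (1 / 3) ^ (n + 1) := by
          apply Summable.tsum_le_tsum (fun n => hbd (n + 1)) hsum'.abs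
          exact (summable_nat_add_iff 1).2 hsumg
      _ = A / 2 := by
          have : ∀ n : ℕ, A * (1 / 3 : ℝ) ^ (n + 1) = (A / 3) * (1 / 3) ^ n := by
            intro n; rw [pow_succ]; ring
          rw [tsum_congr this, tsum_mul_left, tsum_geometric_of_lt_one (by norm_num) (by norm_num)]
          ring
  rw [hzero, hf0]
  simpa using htail

set_option maxHeartbeats 2000000 in
lemma besselJ_continuous (m : ℕ) : Continuous (besselJ m) := by
  rw [continuous_iff_continuousAt]
  intro x
  have hR : (0:ℝ) < |x| + 1 := by positivity
  have hcon : ContinuousOn (besselJ m) (Metric.ball x (1 : ℝ)) := by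
    unfold besselJ
    apply continuousOn_tsum (f := fun (n : ℕ) (y : ℝ) =>
      ((-1 : ℝ) ^ n / (n.factorial * (n + m).factorial)) * (y / 2) ^ (2 * n + m)) (u := fun n : ℕ =>
      (1 / (n.factorial : ℝ)) * (((|x| + 1) / 2) ^ 2) ^ n * ((|x| + 1) / 2) ^ m)
    · intro n; exact (continuous_const.mul (((continuous_id.div_const 2)).pow _)).continuousOn
    · exact ((Real.summable_pow_div_factorial (((|x|+1)/2)^2)).mul_right (((|x|+1)/2)^m)).congr (fun n => by ring)
    · intro n y hy
      have hyx : |y| ≤ |x| + 1 := by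
        have := mem_ball_iff_norm.1 hy
        have h2 : |y - x| < 1 := by simpa [Real.norm_eq_abs] using this
        calc |y| = |y - x + x| := by ring_nf
          _ ≤ |y - x| + |x| := abs_add_le _ _
          _ ≤ |x| + 1 := by linarith
      have h1 : ‖((-1 : ℝ) ^ n / (n.factorial * (n + m).factorial)) * (y / 2) ^ (2 * n + m)‖
          = |y / 2| ^ (2 * n + m) / (n.factorial * (n + m).factorial) := by
        rw [Real.norm_eq_abs, abs_mul, abs_div, abs_pow, abs_pow, abs_neg, abs_one, one_pow,
          abs_of_pos (by positivity : (0:ℝ) < (n.factorial : ℝ) * (n + m).factorial)]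
        ring
      rw [h1]
      have hy2 : |y / 2| ≤ (|x| + 1) / 2 := by rw [abs_div]; simp; linarith [abs_nonneg y]
      have hfle : (1:ℝ) ≤ ((n + m).factorial : ℝ) := by exact_mod_cast (n + m).factorial_pos
      calc |y / 2| ^ (2 * n + m) / ((n.factorial : ℝ) * (n + m).factorial)
          ≤ ((|x| + 1) / 2) ^ (2 * n + m) / ((n.factorial : ℝ) * 1) := by
            apply div_le_div₀ (by positivity)
              (pow_le_pow_left₀ (abs_nonneg _) hy2 _) (by positivity)
            have : (0:ℝ) < (n.factorial : ℝ) := by exact_mod_cast n.factorial_pos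
            nlinarith
        _ = (1 / (n.factorial : ℝ)) * (((|x| + 1) / 2) ^ 2) ^ n * ((|x| + 1) / 2) ^ m := by
            rw [pow_add, ← pow_mul]
            ring
  exact hcon.continuousAt (Metric.ball_mem_nhds x one_pos)

/-- The eigenfunction `v_m(r,θ) = β_m J_m(k r) e^{imθ}`, viewed as a function
on the plane `ℝ² ≅ ℂ` via polar coordinates. -/
noncomputable def vEig (β : ℕ → ℝ) (k : ℝ) (m : ℕ) (z : ℂ) : ℂ :=
  (β m : ℂ) * (besselJ m (k * ‖z‖) : ℂ) *
    Complex.exp (Complex.I * (m : ℂ) * (z.arg : ℂ))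

lemma vEig_normsq (β : ℕ → ℝ) (k : ℝ) (m : ℕ) (z : ℂ) :
    ‖vEig β k m z‖ ^ 2 = (β m) ^ 2 * (besselJ m (k * ‖z‖)) ^ 2 := by
  unfold vEig
  rw [norm_mul, norm_mul, Complex.norm_real, Complex.norm_real]
  have : ‖Complex.exp (Complex.I * (m : ℂ) * (z.arg : ℂ))‖ = 1 := by
    rw [Complex.norm_exp]
    have : (Complex.I * (m : ℂ) * (z.arg : ℂ)).re = 0 := by
      simp [Complex.mul_re, Complex.mul_im]
    rw [this, Real.exp_zero]
  rw [this, mul_one, mul_pow, Real.norm_eq_abs, Real.norm_eq_abs, sq_abs, sq_abs]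

set_option maxHeartbeats 1000000 in
lemma ratio_bound (k r₀ ξ : ℝ) (hk : 0 < k) (hr₀ : 0 < r₀) (hξ0 : 0 < ξ) (hξ1 : ξ < 1)
    (β : ℕ → ℝ) (hβ : ∀ m, 0 < β m) (m : ℕ) (hm : 3 * (k * r₀ / 2) ^ 2 ≤ m + 1) :
    (∫ z in Metric.ball (0 : ℂ) (ξ * r₀), ‖vEig β k m z‖ ^ 2) /
      (∫ z in Metric.ball (0 : ℂ) r₀, ‖vEig β k m z‖ ^ 2) ≤ 9 * ξ ^ (2 * m + 2) := by
  set g : ℂ → ℝ := fun z => (β m) ^ 2 * (besselJ m (k * ‖z‖)) ^ 2 with hgdef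
  set P : ℂ → ℝ := fun z =>
    (β m) ^ 2 * ((k * ‖z‖ / 2) ^ m / m.factorial) ^ 2 with hPdef
  have hgcont : Continuous g := by
    apply continuous_const.mul
    exact ((besselJ_continuous m).comp (continuous_const.mul continuous_norm)).pow 2
  have hPcont : Continuous P := by
    apply continuous_const.mul
    exact ((((continuous_const.mul continuous_norm).div_const 2).pow m).div_const _).pow 2
  -- pointwise bounds on the ball of radius r₀
  have hbd : ∀ z : ℂ, ‖z‖ ≤ r₀ → (1 / 4) * P z ≤ g z ∧ g z ≤ (9 / 4) * P z := by
    intro z hz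
    have hx0 : 0 ≤ k * ‖z‖ := by positivity
    have hxle : k * ‖z‖ ≤ k * r₀ := by
      exact mul_le_mul_of_nonneg_left hz hk.le
    have hcond : 3 * (k * ‖z‖ / 2) ^ 2 ≤ m + 1 := by
      have : (k * ‖z‖ / 2) ^ 2 ≤ (k * r₀ / 2) ^ 2 := by
        apply pow_le_pow_left₀ (by positivity)
        linarith
      linarith
    have hest := besselJ_est m (k * ‖z‖) hx0 hcond
    set a : ℝ := (k * ‖z‖ / 2) ^ m / m.factorial with hadef
    have ha0 : 0 ≤ a := by positivity
    have h1 : a / 2 ≤ besselJ m (k * ‖z‖) := by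
      have := abs_le.1 hest
      linarith [this.1]
    have h2 : besselJ m (k * ‖z‖) ≤ 3 * a / 2 := by
      have := abs_le.1 hest
      linarith [this.2]
    have hJ0 : 0 ≤ besselJ m (k * ‖z‖) := by linarith
    constructor
    · have : (a / 2) ^ 2 ≤ (besselJ m (k * ‖z‖)) ^ 2 :=
        pow_le_pow_left₀ (by linarith) h1 2
      have hb2 : 0 ≤ (β m) ^ 2 := sq_nonneg _
      simp only [hgdef, hPdef, ← hadef]
      nlinarith
    · have : (besselJ m (k * ‖z‖)) ^ 2 ≤ (3 * a / 2) ^ 2 :=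
        pow_le_pow_left₀ hJ0 h2 2
      have hb2 : 0 ≤ (β m) ^ 2 := sq_nonneg _
      simp only [hgdef, hPdef, ← hadef]
      nlinarith
  -- integrability
  have hgint : ∀ r : ℝ, IntegrableOn g (Metric.ball (0 : ℂ) r) := fun r =>
    ((hgcont.continuousOn).integrableOn_compact (isCompact_closedBall 0 r)).mono_set
      Metric.ball_subset_closedBall
  have hPint : ∀ r : ℝ, IntegrableOn P (Metric.ball (0 : ℂ) r) := fun r =>
    ((hPcont.continuousOn).integrableOn_compact (isCompact_closedBall 0 r)).mono_set
      Metric.ball_subset_closedBall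
  set Q : ℝ := ∫ z in Metric.ball (0 : ℂ) r₀, P z with hQdef
  -- positivity of Q
  have hQpos : 0 < Q := by
    rw [hQdef, setIntegral_pos_iff_support_of_nonneg_ae]
    · apply lt_of_lt_of_le (b := volume (Metric.ball (0 : ℂ) r₀ \ {0}))
      · rw [measure_diff_null (measure_singleton 0)]
        exact Metric.measure_ball_pos volume 0 hr₀
      · apply measure_mono
        rintro z ⟨hz1, hz2⟩
        refine ⟨?_, hz1⟩
        simp only [Function.mem_support, hPdef]
        have hz0 : z ≠ 0 := by simpa using hz2
        have habs : 0 < ‖z‖ := by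
          simpa using hz0
        have h1 : 0 < k * ‖z‖ / 2 := by positivity
        exact ne_of_gt (mul_pos (pow_pos (hβ m) 2)
          (pow_pos (div_pos (pow_pos h1 m) (by exact_mod_cast m.factorial_pos)) 2))
    · filter_upwards with z
      simp only [hPdef, Pi.zero_apply]
      positivity
    · exact hPint r₀
  -- scaling identity
  have hscale : ∫ z in Metric.ball (0 : ℂ) (ξ * r₀), P z = ξ ^ (2 * m + 2) * Q := by
    have h1 := Measure.setIntegral_comp_smul_of_pos volume P (Metric.ball (0 : ℂ) r₀) hξ0
    have hsmulball : ξ • Metric.ball (0 : ℂ) r₀ = Metric.ball (0 : ℂ) (ξ * r₀) := by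
      rw [smul_ball hξ0.ne' (0 : ℂ) r₀]
      simp [Real.norm_eq_abs, abs_of_pos hξ0]
    have hPsmul : ∀ x : ℂ, P (ξ • x) = ξ ^ (2 * m) * P x := by
      intro x
      simp only [hPdef]
      have habs : ‖ξ • x‖ = ξ * ‖x‖ := by
        rw [norm_smul, Real.norm_eq_abs, abs_of_pos hξ0]
      rw [habs]
      have : (k * (ξ * ‖x‖) / 2) ^ m = ξ ^ m * (k * ‖x‖ / 2) ^ m := by
        rw [← mul_pow]; ring_nf
      rw [this]
      rw [pow_mul]
      field_simp
      ring
    rw [hsmulball, Complex.finrank_real_complex] at h1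
    have h2 : ∫ x in Metric.ball (0 : ℂ) r₀, P (ξ • x) = ξ ^ (2 * m) * Q := by
      rw [hQdef, ← integral_const_mul]
      exact integral_congr_ae (Filter.Eventually.of_forall fun x => hPsmul x)
    rw [h2] at h1
    have hξ2 : (0:ℝ) < ξ ^ 2 := by positivity
    rw [smul_eq_mul] at h1
    have : ∫ z in Metric.ball (0 : ℂ) (ξ * r₀), P z
        = ξ ^ 2 * (ξ ^ (2 * m) * Q) := by
      field_simp at h1 ⊢
      linarith
    rw [this, pow_add]
    ring
  -- numerator and denominator bounds
  have hrw : ∀ r : ℝ, (∫ z in Metric.ball (0 : ℂ) r, ‖vEig β k m z‖ ^ 2)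
      = ∫ z in Metric.ball (0 : ℂ) r, g z := by
    intro r
    apply integral_congr_ae
    filter_upwards with z
    rw [vEig_normsq]
  have hnum : (∫ z in Metric.ball (0 : ℂ) (ξ * r₀), g z) ≤ (9 / 4) * (ξ ^ (2 * m + 2) * Q) := by
    calc (∫ z in Metric.ball (0 : ℂ) (ξ * r₀), g z)
        ≤ ∫ z in Metric.ball (0 : ℂ) (ξ * r₀), (9 / 4) * P z := by
          apply setIntegral_mono_on (hgint _) ((hPint _).const_mul _)
            measurableSet_ball
          intro z hz
          apply (hbd z ?_).2
          have : ‖z‖ < ξ * r₀ := by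
            simpa [Complex.dist_eq] using Metric.mem_ball.1 hz
          nlinarith
      _ = (9 / 4) * (ξ ^ (2 * m + 2) * Q) := by rw [integral_const_mul, hscale]
  have hden : (1 / 4) * Q ≤ ∫ z in Metric.ball (0 : ℂ) r₀, g z := by
    calc (1 / 4) * Q = ∫ z in Metric.ball (0 : ℂ) r₀, (1 / 4) * P z := by
          rw [integral_const_mul, hQdef]
      _ ≤ ∫ z in Metric.ball (0 : ℂ) r₀, g z := by
          apply setIntegral_mono_on ((hPint _).const_mul _) (hgint _) measurableSet_ball
          intro z hz
          apply (hbd z ?_).1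
          have : ‖z‖ < r₀ := by
            simpa [Complex.dist_eq] using Metric.mem_ball.1 hz
          linarith
  have hnum0 : 0 ≤ ∫ z in Metric.ball (0 : ℂ) (ξ * r₀), g z := by
    apply setIntegral_nonneg measurableSet_ball
    intro z _
    simp only [hgdef]
    positivity
  rw [hrw, hrw]
  have hQ4 : 0 < (1 / 4) * Q := by linarith
  calc (∫ z in Metric.ball (0 : ℂ) (ξ * r₀), g z) / (∫ z in Metric.ball (0 : ℂ) r₀, g z)
      ≤ ((9 / 4) * (ξ ^ (2 * m + 2) * Q)) / ((1 / 4) * Q) := by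
        apply div_le_div₀ (by positivity) hnum hQ4 hden
    _ = 9 * ξ ^ (2 * m + 2) := by field_simp

/-- For `v_m(r,θ) = β_m J_m(kr)e^{imθ}` on the disk `B_{r₀}`,
the mass ratio satisfies
`‖v_m‖²_{L²(B_{ξr₀})}/‖v_m‖²_{L²(B_{r₀})} ≤ C(k,r₀) ξ^{2m+2}(1+2m)` for all
large `m`, and in particular tends to `0`: the `v_m` are surface-localized. -/
theorem vEig_surface_localized (k r₀ ξ : ℝ) (hk : 0 < k) (hr₀ : 0 < r₀)
    (hξ : ξ ∈ Set.Ioo (0 : ℝ) 1) (β : ℕ → ℝ) (hβ : ∀ m, 0 < β m) :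
    (∃ C > 0, ∃ M : ℕ, ∀ m ≥ M,
      (∫ z in Metric.ball (0 : ℂ) (ξ * r₀), ‖vEig β k m z‖ ^ 2) /
          (∫ z in Metric.ball (0 : ℂ) r₀, ‖vEig β k m z‖ ^ 2) ≤
        C * ξ ^ (2 * m + 2) * (1 + 2 * m)) ∧
    Tendsto (fun m : ℕ =>
      (∫ z in Metric.ball (0 : ℂ) (ξ * r₀), ‖vEig β k m z‖ ^ 2) /
        (∫ z in Metric.ball (0 : ℂ) r₀, ‖vEig β k m z‖ ^ 2)) atTop (nhds 0) := by

  obtain ⟨hξ0, hξ1⟩ := hξ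
  set M : ℕ := ⌈3 * (k * r₀ / 2) ^ 2⌉₊ with hMdef
  have hMcond : ∀ m : ℕ, M ≤ m → 3 * (k * r₀ / 2) ^ 2 ≤ (m : ℝ) + 1 := by
    intro m hm
    calc (3 : ℝ) * (k * r₀ / 2) ^ 2 ≤ (M : ℝ) := Nat.le_ceil _
      _ ≤ (m : ℝ) := by exact_mod_cast hm
      _ ≤ (m : ℝ) + 1 := by linarith
  have key : ∀ m : ℕ, M ≤ m →
      (∫ z in Metric.ball (0 : ℂ) (ξ * r₀), ‖vEig β k m z‖ ^ 2) /
        (∫ z in Metric.ball (0 : ℂ) r₀, ‖vEig β k m z‖ ^ 2) ≤ 9 * ξ ^ (2 * m + 2) :=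
    fun m hm => ratio_bound k r₀ ξ hk hr₀ hξ0 hξ1 β hβ m (hMcond m hm)
  have hnn : ∀ m : ℕ, 0 ≤
      (∫ z in Metric.ball (0 : ℂ) (ξ * r₀), ‖vEig β k m z‖ ^ 2) /
        (∫ z in Metric.ball (0 : ℂ) r₀, ‖vEig β k m z‖ ^ 2) := by
    intro m
    apply div_nonneg <;>
      exact setIntegral_nonneg measurableSet_ball (fun z _ => by positivity)
  constructor
  · refine ⟨9, by norm_num, M, fun m hm => ?_⟩
    calc (∫ z in Metric.ball (0 : ℂ) (ξ * r₀), ‖vEig β k m z‖ ^ 2) /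
          (∫ z in Metric.ball (0 : ℂ) r₀, ‖vEig β k m z‖ ^ 2)
        ≤ 9 * ξ ^ (2 * m + 2) := key m hm
      _ ≤ 9 * ξ ^ (2 * m + 2) * (1 + 2 * m) := by
          apply le_mul_of_one_le_right (by positivity)
          have : (0:ℝ) ≤ (m : ℝ) := Nat.cast_nonneg m
          linarith
  · have hb : Tendsto (fun m : ℕ => 9 * ξ ^ (2 * m + 2)) atTop (nhds 0) := by
      have h1 : Tendsto (fun n : ℕ => ξ ^ n) atTop (nhds 0) :=
        tendsto_pow_atTop_nhds_zero_of_lt_one hξ0.le hξ1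
      have h2 : Tendsto (fun m : ℕ => 2 * m + 2) atTop atTop :=
        tendsto_atTop_mono (fun m => by simp only [id_eq]; omega) tendsto_id
      have := (h1.comp h2).const_mul (9 : ℝ)
      simpa using this
    exact squeeze_zero' (Filter.Eventually.of_forall hnn)
      ((eventually_atTop.2 ⟨M, key⟩)) hb
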